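/- If A is a symmetric positive-definite banded matrix with bandwidth k (A i j = 0 whenever |i - j| > k), then its Cholesky factor L also satisfies L i j = 0 whenever i - j > k; i.e., the banded structure is preserved by Cholesky factorization. -/
import Mathlib


open Matrix in
theorem cholesky_preserves_band (n k : ℕ) (A L : Matrix (Fin n) (Fin n) ℝ)
    (hsymm : Aᵀ = A) (hpd : A.PosDef)
    (hband : ∀ i j : Fin n, ((i : ℕ) + k < (j : ℕ) ∨ (j : ℕ) + k < (i : ℕ)) → A i j = 0)
    (hlow : ∀ i j : Fin n, i < j → L i j = 0)
    (hdiag : ∀ i, 0 < L i i)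
    (hfac : A = L * Lᵀ) :
    ∀ i j : Fin n, (j : ℕ) + k < (i : ℕ) → L i j = 0 := by
  have key : ∀ m : ℕ, ∀ j : Fin n, (j : ℕ) = m → ∀ i : Fin n, (j : ℕ) + k < (i : ℕ) → L i j = 0 := by
    intro m
    induction m using Nat.strong_induction_on with
    | _ m ih =>
      intro j hj i hik
      have hA : A i j = 0 := hband i j (Or.inr hik)
      have hsum : A i j = ∑ x, L i x * L j x := by
        rw [hfac]; simp [Matrix.mul_apply, Matrix.transpose_apply]
      have hone : ∑ x, L i x * L j x = L i j * L j j := by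
        apply Finset.sum_eq_single
        · intro x _ hx
          rcases lt_or_gt_of_ne hx with h | h
          · have hxj : (x : ℕ) < (j : ℕ) := h
            have hx0 : L i x = 0 := ih (x : ℕ) (by omega) x rfl i (by omega)
            rw [hx0, zero_mul]
          · rw [hlow j x h, mul_zero]
        · intro h; exact absurd (Finset.mem_univ j) h
      have : L i j * L j j = 0 := by rw [← hone, ← hsum, hA]
      exact (mul_eq_zero.mp this).resolve_right (ne_of_gt (hdiag j))
  intro i j hij
  exact key (j : ℕ) j rfl i hij
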